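/- If A is in the multiplicative domain of a unital completely positive map Φ on n×n matrices given in Kraus form, then Φ(AB) = Φ(A)Φ(B) and Φ(BA) = Φ(B)Φ(A) for every matrix B (Choi's bimodule property of the multiplicative domain). -/
import Mathlib

open Matrix Finset

lemma aux_sum_zero {m n p : ℕ} (M : Fin m → Matrix (Fin n) (Fin p) ℂ)
    (h : ∑ j, (M j)ᴴ * M j = 0) : ∀ j, M j = 0 := by
  have key : ∀ i : Fin p, ∑ j, ∑ k, Complex.normSq (M j k i) = 0 := by
    intro i
    have h' := congrFun (congrFun h i) i
    simp only [Matrix.sum_apply, Matrix.mul_apply, Matrix.conjTranspose_apply,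
      Matrix.zero_apply] at h'
    have : (↑(∑ j, ∑ k, Complex.normSq (M j k i)) : ℂ) = 0 := by
      rw [← h']
      push_cast
      refine Finset.sum_congr rfl fun j _ => Finset.sum_congr rfl fun k _ => ?_
      rw [Complex.star_def, ← Complex.normSq_eq_conj_mul_self]
    exact_mod_cast this
  intro j
  ext k i
  have h1 := key i
  have h2 : ∀ j ∈ Finset.univ, (0:ℝ) ≤ ∑ k, Complex.normSq (M j k i) :=
    fun j _ => Finset.sum_nonneg fun k _ => Complex.normSq_nonneg _
  have h3 := (Finset.sum_eq_zero_iff_of_nonneg h2).mp h1 j (Finset.mem_univ j)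
  have h4 := (Finset.sum_eq_zero_iff_of_nonneg
    (fun k _ => Complex.normSq_nonneg (M j k i))).mp h3 k (Finset.mem_univ k)
  simpa using Complex.normSq_eq_zero.mp h4

theorem stmt_4 {n m : ℕ} (V : Fin m → Matrix (Fin n) (Fin n) ℂ)
    (hV : ∑ k, (V k)ᴴ * V k = 1)
    (A : Matrix (Fin n) (Fin n) ℂ)
    (h1 : (∑ k, (V k)ᴴ * (Aᴴ * A) * V k)
      = (∑ k, (V k)ᴴ * A * V k)ᴴ * (∑ k, (V k)ᴴ * A * V k))
    (h2 : (∑ k, (V k)ᴴ * (A * Aᴴ) * V k)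
      = (∑ k, (V k)ᴴ * A * V k) * (∑ k, (V k)ᴴ * A * V k)ᴴ) :
    ∀ B : Matrix (Fin n) (Fin n) ℂ,
      (∑ k, (V k)ᴴ * (A * B) * V k)
        = (∑ k, (V k)ᴴ * A * V k) * (∑ k, (V k)ᴴ * B * V k) ∧
      (∑ k, (V k)ᴴ * (B * A) * V k)
        = (∑ k, (V k)ᴴ * B * V k) * (∑ k, (V k)ᴴ * A * V k) := by
  set ΦA : Matrix (Fin n) (Fin n) ℂ := ∑ k, (V k)ᴴ * A * V k with hΦA
  have hΦAH : ΦAᴴ = ∑ k, (V k)ᴴ * Aᴴ * V k := by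
    rw [hΦA, conjTranspose_sum]
    exact Finset.sum_congr rfl fun k _ => by
      simp [Matrix.conjTranspose_mul, Matrix.mul_assoc]
  -- A * V j = V j * ΦA
  have key1 : ∀ j, A * V j = V j * ΦA := by
    have hz : ∑ j, (A * V j - V j * ΦA)ᴴ * (A * V j - V j * ΦA) = 0 := by
      have expand : ∀ j, (A * V j - V j * ΦA)ᴴ * (A * V j - V j * ΦA)
          = (V j)ᴴ * (Aᴴ * A) * V j - ((V j)ᴴ * Aᴴ * V j) * ΦA
            - ΦAᴴ * ((V j)ᴴ * A * V j) + ΦAᴴ * ((V j)ᴴ * V j) * ΦA := by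
        intro j
        simp only [conjTranspose_sub, conjTranspose_mul]
        noncomm_ring
      simp only [expand, Finset.sum_add_distrib, Finset.sum_sub_distrib,
        ← Finset.sum_mul, ← Finset.mul_sum, hV, ← hΦAH, ← hΦA, h1]
      simp only [Matrix.mul_one]
      abel
    intro j
    have := aux_sum_zero _ hz j
    rwa [sub_eq_zero] at this
  -- (V j)ᴴ * A = ΦA * (V j)ᴴ
  have key2 : ∀ j, (V j)ᴴ * A = ΦA * (V j)ᴴ := by
    have hz : ∑ j, (Aᴴ * V j - V j * ΦAᴴ)ᴴ * (Aᴴ * V j - V j * ΦAᴴ) = 0 := by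
      have expand : ∀ j, (Aᴴ * V j - V j * ΦAᴴ)ᴴ * (Aᴴ * V j - V j * ΦAᴴ)
          = (V j)ᴴ * (A * Aᴴ) * V j - ((V j)ᴴ * A * V j) * ΦAᴴ
            - ΦA * ((V j)ᴴ * Aᴴ * V j) + ΦA * ((V j)ᴴ * V j) * ΦAᴴ := by
        intro j
        simp only [conjTranspose_sub, conjTranspose_mul, conjTranspose_conjTranspose]
        noncomm_ring
      simp only [expand, Finset.sum_add_distrib, Finset.sum_sub_distrib,
        ← Finset.sum_mul, ← Finset.mul_sum, hV, ← hΦAH, ← hΦA, h2]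
      simp only [Matrix.mul_one]
      abel
    intro j
    have h0 := aux_sum_zero _ hz j
    rw [sub_eq_zero] at h0
    calc (V j)ᴴ * A = (Aᴴ * V j)ᴴ := by simp [conjTranspose_mul]
    _ = (V j * ΦAᴴ)ᴴ := by rw [h0]
    _ = ΦA * (V j)ᴴ := by simp [conjTranspose_mul]
  intro B
  constructor
  · calc ∑ k, (V k)ᴴ * (A * B) * V k
        = ∑ k, ΦA * ((V k)ᴴ * B * V k) := by
          refine Finset.sum_congr rfl fun k _ => ?_
          rw [show (V k)ᴴ * (A * B) = ((V k)ᴴ * A) * B by rw [Matrix.mul_assoc],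
            key2 k]
          noncomm_ring
    _ = ΦA * ∑ k, (V k)ᴴ * B * V k := by rw [Finset.mul_sum]
  · calc ∑ k, (V k)ᴴ * (B * A) * V k
        = ∑ k, ((V k)ᴴ * B * V k) * ΦA := by
          refine Finset.sum_congr rfl fun k _ => ?_
          rw [show (V k)ᴴ * (B * A) * V k = (V k)ᴴ * B * (A * V k) by noncomm_ring,
            key1 k]
          noncomm_ring
    _ = (∑ k, (V k)ᴴ * B * V k) * ΦA := by rw [Finset.sum_mul]
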